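/- On L_{n,r}, for any λ_0, λ_1 ∈ ℂ, the linear map f given by f(X_0) = λ_0 X_0, f(X_i) = ((i-1)λ_0 + λ_1) X_i for 1 ≤ i ≤ n-2, and f(X_{n-1}) = ((r-2)λ_0 + 2λ_1) X_{n-1} is a derivation of L_{n,r}. Hence L_{n,r} has rank at least 2. -/
import Mathlib


open Finset

/-- The `k`-th standard basis vector of `ℂⁿ` (zero if `k ≥ n`). -/
noncomputable def E (n k : ℕ) : Fin n → ℂ := fun t => if (t : ℕ) = k then 1 else 0

/-- The bilinear bracket on `ℂⁿ` determined by structure constants `s`, antisymmetrized: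
`[e_i, e_j] = s i j - s j i`. -/
noncomputable def brkt (n : ℕ) (s : ℕ → ℕ → Fin n → ℂ) (x y : Fin n → ℂ) : Fin n → ℂ :=
  ∑ i : Fin n, ∑ j : Fin n, (x i * y j) • (s (i : ℕ) (j : ℕ) - s (j : ℕ) (i : ℕ))

/-- Structure constants of `L_{n,r}`: `[X₀, Xᵢ] = X_{i+1}` for `1 ≤ i ≤ n-3` and
`[Xᵢ, X_{r-i}] = (-1)^{i-1} X_{n-1}` for `1 ≤ i ≤ (r-1)/2`. -/
noncomputable def sLnr (n r : ℕ) : ℕ → ℕ → Fin n → ℂ := fun i j =>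
  (if i = 0 ∧ 1 ≤ j ∧ j ≤ n - 3 then E n (j + 1) else 0) +
  (if 1 ≤ i ∧ i ≤ (r - 1) / 2 ∧ j = r - i then ((-1 : ℂ) ^ (i - 1)) • E n (n - 1) else 0)

/-- The diagonal map `f(X₀)=λ₀X₀`, `f(Xᵢ)=((i-1)λ₀+λ₁)Xᵢ` for `1 ≤ i ≤ n-2`,
`f(X_{n-1}) = ((r-2)λ₀ + 2λ₁) X_{n-1}`. -/
noncomputable def dLnr (n r : ℕ) (l0 l1 : ℂ) (x : Fin n → ℂ) : Fin n → ℂ := fun t =>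
  (if (t : ℕ) = 0 then l0
   else if (t : ℕ) = n - 1 then ((r - 2 : ℕ) : ℂ) * l0 + 2 * l1
   else (((t : ℕ) - 1 : ℕ) : ℂ) * l0 + l1) * x t


noncomputable def Dc (n r : ℕ) (l0 l1 : ℂ) (t : Fin n) : ℂ :=
  if (t : ℕ) = 0 then l0
  else if (t : ℕ) = n - 1 then ((r - 2 : ℕ) : ℂ) * l0 + 2 * l1
  else (((t : ℕ) - 1 : ℕ) : ℂ) * l0 + l1

lemma dLnr_eq (n r : ℕ) (l0 l1 : ℂ) (x : Fin n → ℂ) (t : Fin n) :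
    dLnr n r l0 l1 x t = Dc n r l0 l1 t * x t := rfl

lemma key (n r : ℕ) (hn : 5 ≤ n) (hr3 : 3 ≤ r) (hrn2 : r ≤ n - 2) (l0 l1 : ℂ)
    (i j t : Fin n) :
    (Dc n r l0 l1 t - Dc n r l0 l1 i - Dc n r l0 l1 j) * sLnr n r (i : ℕ) (j : ℕ) t = 0 := by
  have hi := i.isLt; have hj := j.isLt; have ht := t.isLt
  simp only [sLnr, Pi.add_apply]
  rw [mul_add]
  have h1 : (Dc n r l0 l1 t - Dc n r l0 l1 i - Dc n r l0 l1 j) *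
      (if (i : ℕ) = 0 ∧ 1 ≤ (j : ℕ) ∧ (j : ℕ) ≤ n - 3 then E n ((j : ℕ) + 1) else 0) t = 0 := by
    split_ifs with h
    · obtain ⟨hi0, hj1, hj3⟩ := h
      simp only [E]
      split_ifs with htj
      · obtain ⟨k, hk⟩ : ∃ k, (j : ℕ) = k + 1 := ⟨(j : ℕ) - 1, by omega⟩
        have hDt : Dc n r l0 l1 t = ((k + 1 : ℕ) : ℂ) * l0 + l1 := by
          have h5 : (t : ℕ) - 1 = k + 1 := by omega
          simp only [Dc]
          rw [if_neg (by omega), if_neg (by omega), h5]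
        have hDi : Dc n r l0 l1 i = l0 := by
          simp only [Dc]; rw [if_pos hi0]
        have hDj : Dc n r l0 l1 j = ((k : ℕ) : ℂ) * l0 + l1 := by
          have h5 : (j : ℕ) - 1 = k := by omega
          simp only [Dc]
          rw [if_neg (by omega), if_neg (by omega), h5]
        rw [hDt, hDi, hDj]
        push_cast
        ring
      · simp
    · simp
  have h2 : (Dc n r l0 l1 t - Dc n r l0 l1 i - Dc n r l0 l1 j) *
      (if 1 ≤ (i : ℕ) ∧ (i : ℕ) ≤ (r - 1) / 2 ∧ (j : ℕ) = r - (i : ℕ) then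
        ((-1 : ℂ) ^ ((i : ℕ) - 1)) • E n (n - 1) else 0) t = 0 := by
    split_ifs with h
    · obtain ⟨hi1, hi2, hjri⟩ := h
      simp only [Pi.smul_apply, smul_eq_mul, E]
      split_ifs with htn
      · have hDt : Dc n r l0 l1 t = ((r - 2 : ℕ) : ℂ) * l0 + 2 * l1 := by
          simp only [Dc]; rw [if_neg (by omega), if_pos htn]
        have hDi : Dc n r l0 l1 i = (((i : ℕ) - 1 : ℕ) : ℂ) * l0 + l1 := by
          simp only [Dc]; rw [if_neg (by omega), if_neg (by omega)]
        have hDj : Dc n r l0 l1 j = (((j : ℕ) - 1 : ℕ) : ℂ) * l0 + l1 := by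
          simp only [Dc]; rw [if_neg (by omega), if_neg (by omega)]
        have hnat : ((i : ℕ) - 1) + ((j : ℕ) - 1) = r - 2 := by omega
        rw [hDt, hDi, hDj, ← hnat, Nat.cast_add]
        ring
      · simp
    · simp
  rw [h1, h2, add_zero]

/-- on `L_{n,r}`, `dLnr n r λ₀ λ₁` is a derivation for all `λ₀, λ₁`; the two
derivations with `(λ₀,λ₁) = (1,0), (0,1)` commute and are linearly independent, so
`L_{n,r}` has rank at least 2. -/
theorem stmt_10 (n r : ℕ) (hn : 5 ≤ n) (hr : Odd r) (hr3 : 3 ≤ r)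
    (hrn : r ≤ 2 * ((n - 1) / 2) - 1) :
    (∀ l0 l1 : ℂ, ∀ x y : Fin n → ℂ,
        dLnr n r l0 l1 (brkt n (sLnr n r) x y)
          = brkt n (sLnr n r) (dLnr n r l0 l1 x) y + brkt n (sLnr n r) x (dLnr n r l0 l1 y)) ∧
    (dLnr n r 1 0 ∘ dLnr n r 0 1 = dLnr n r 0 1 ∘ dLnr n r 1 0) ∧
    LinearIndependent ℂ ![dLnr n r 1 0, dLnr n r 0 1] := by
  have hrn2 : r ≤ n - 2 := by omega
  refine ⟨?_, ?_, ?_⟩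
  · intro l0 l1 x y
    funext t
    simp only [dLnr_eq, brkt, Finset.sum_apply, Pi.smul_apply, smul_eq_mul, Pi.sub_apply,
      Pi.add_apply]
    rw [Finset.mul_sum, ← Finset.sum_add_distrib]
    refine Finset.sum_congr rfl fun i _ => ?_
    rw [Finset.mul_sum, ← Finset.sum_add_distrib]
    refine Finset.sum_congr rfl fun j _ => ?_
    have k1 := key n r hn hr3 hrn2 l0 l1 i j t
    have k2 := key n r hn hr3 hrn2 l0 l1 j i t
    linear_combination (x i * y j) * k1 - (x i * y j) * k2
  · funext x t
    simp only [Function.comp_apply, dLnr_eq]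
    ring
  · rw [LinearIndependent.pair_iff]
    intro s u hsu
    have hn1 : (1:ℕ) ≠ n - 1 := by omega
    constructor
    · have h0 := congrFun (congrFun hsu (E n 0)) ⟨0, by omega⟩
      simpa [dLnr, E] using h0
    · have h1 := congrFun (congrFun hsu (E n 1)) ⟨1, by omega⟩
      simpa [dLnr, E, hn1] using h1
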